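/- Let A ∈ M_d(K) be a nilpotent matrix over a field K whose Jordan form has p_e blocks of size e for each e ≥ 1. Then Cen(A) modulo its Jacobson radical is isomorphic to the direct product of the matrix algebras M_{p_e}(K) over those e with p_e > 0. -/

import Mathlib

open Matrix

set_option maxHeartbeats 1000000
set_option synthInstance.maxHeartbeats 400000

namespace Stmt16Aux

variable {K : Type*} [Field K] {d : ℕ} (A : Matrix (Fin d) (Fin d) K)
  {m : ℕ} {k : Fin m → ℕ}
  {x : Fin m → (Fin d → K)}

theorem toLin'_pow (B : Matrix (Fin d) (Fin d) K) (n : ℕ) :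
    Matrix.toLin' (B ^ n) = (Matrix.toLin' B) ^ n := by
  induction n with
  | zero => simp [Matrix.toLin'_one]; rfl
  | succ n ih => rw [pow_succ, pow_succ, Matrix.toLin'_mul, ih]; rfl

theorem pow_x (hzero : ∀ γ, ((Matrix.toLin' A) ^ (k γ)) (x γ) = 0)
    (b : Module.Basis ((γ : Fin m) × Fin (k γ)) K (Fin d → K))
    (hb : ∀ p : (γ : Fin m) × Fin (k γ), b p = ((Matrix.toLin' A) ^ ((p.2 : ℕ))) (x p.1))
    (γ : Fin m) (n : ℕ) :
    ((Matrix.toLin' A) ^ n) (x γ) = if h : n < k γ then b ⟨γ, ⟨n, h⟩⟩ else 0 := by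
  split_ifs with h
  · exact (hb ⟨γ, ⟨n, h⟩⟩).symm
  · have hn : n = (n - k γ) + k γ := (Nat.sub_add_cancel (le_of_not_gt h)).symm
    rw [hn, pow_add, Module.End.mul_apply, hzero, map_zero]

theorem comm_pow {B : Matrix (Fin d) (Fin d) K} (hc : A * B = B * A) (n : ℕ)
    (v : Fin d → K) :
    Matrix.toLin' B (((Matrix.toLin' A) ^ n) v) = ((Matrix.toLin' A) ^ n) (Matrix.toLin' B v) := by
  have h2 : B * A ^ n = A ^ n * B := ((Commute.pow_left (hc : Commute A B) n).symm).eq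
  have := congrArg (fun M => Matrix.toLin' M v) h2
  simpa [Matrix.toLin'_mul, toLin'_pow] using this

theorem repr_pow_apply (hzero : ∀ γ, ((Matrix.toLin' A) ^ (k γ)) (x γ) = 0)
    (b : Module.Basis ((γ : Fin m) × Fin (k γ)) K (Fin d → K))
    (hb : ∀ p : (γ : Fin m) × Fin (k γ), b p = ((Matrix.toLin' A) ^ ((p.2 : ℕ))) (x p.1))
    (n : ℕ) (δ : Fin m) (s : ℕ) (hs : s < k δ) (w : Fin d → K) :
    b.repr (((Matrix.toLin' A) ^ n) w) ⟨δ, ⟨s, hs⟩⟩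
      = if n ≤ s then b.repr w ⟨δ, ⟨s - n, by omega⟩⟩ else 0 := by
  have key : ∀ q : (γ : Fin m) × Fin (k γ),
      b.repr (((Matrix.toLin' A) ^ n) (b q)) ⟨δ, ⟨s, hs⟩⟩
        = if n ≤ s then b.repr (b q) ⟨δ, ⟨s - n, by omega⟩⟩ else 0 := by
    rintro ⟨ε, j, hj⟩
    have e1 : ((Matrix.toLin' A) ^ n) (b ⟨ε, ⟨j, hj⟩⟩) = ((Matrix.toLin' A) ^ (n + j)) (x ε) := by
      rw [hb ⟨ε, ⟨j, hj⟩⟩, ← Module.End.mul_apply, ← pow_add]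
    rw [e1, pow_x A hzero b hb]
    by_cases hεδ : ε = δ
    · subst hεδ
      by_cases h1 : n + j < k ε
      · rw [dif_pos h1, b.repr_self_apply, b.repr_self_apply]
        simp only [Sigma.mk.inj_iff, heq_eq_eq, Fin.mk.injEq, true_and]
        split_ifs <;> first | rfl | omega
      · rw [dif_neg h1, map_zero, Finsupp.zero_apply, b.repr_self_apply]
        simp only [Sigma.mk.inj_iff, heq_eq_eq, Fin.mk.injEq, true_and]
        split_ifs <;> first | rfl | omega
    · have hne1 : ∀ (u : Fin (k ε)) (v : Fin (k δ)), (⟨ε, u⟩ : (γ : Fin m) × Fin (k γ)) ≠ ⟨δ, v⟩ :=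
        fun u v h => hεδ (congrArg Sigma.fst h)
      by_cases h1 : n + j < k ε
      · rw [dif_pos h1, b.repr_self_apply, b.repr_self_apply, if_neg (hne1 _ _), if_neg (hne1 _ _)]
        simp
      · rw [dif_neg h1, map_zero, Finsupp.zero_apply, b.repr_self_apply, if_neg (hne1 _ _)]
        simp
  calc b.repr (((Matrix.toLin' A) ^ n) w) ⟨δ, ⟨s, hs⟩⟩
      = ∑ q, b.repr w q * b.repr (((Matrix.toLin' A) ^ n) (b q)) ⟨δ, ⟨s, hs⟩⟩ := by
        conv_lhs => rw [← b.sum_repr w]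
        rw [map_sum, map_sum, Finset.sum_apply']
        refine Finset.sum_congr rfl fun q _ => ?_
        rw [_root_.map_smul, _root_.map_smul, Finsupp.smul_apply, smul_eq_mul]
    _ = _ := by
        simp_rw [key]
        by_cases h : n ≤ s
        · simp only [if_pos h]
          rw [Finset.sum_eq_single (⟨δ, ⟨s - n, by omega⟩⟩ : (γ : Fin m) × Fin (k γ))]
          · rw [b.repr_self_apply, if_pos rfl, mul_one]
          · intro q _ hq; rw [b.repr_self_apply, if_neg hq, mul_zero]
          · intro h; exact absurd (Finset.mem_univ _) h
        · simp [if_neg h]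


noncomputable def coeff (hk1 : ∀ γ, 1 ≤ k γ) (x : Fin m → (Fin d → K))
    (b : Module.Basis ((γ : Fin m) × Fin (k γ)) K (Fin d → K))
    (B : Matrix (Fin d) (Fin d) K) (δ γ : Fin m) : K :=
  b.repr (Matrix.toLin' B (x γ)) ⟨δ, ⟨0, hk1 δ⟩⟩

theorem coeff_add (hk1 : ∀ γ, 1 ≤ k γ)
    (b : Module.Basis ((γ : Fin m) × Fin (k γ)) K (Fin d → K))
    (B B' : Matrix (Fin d) (Fin d) K) (δ γ : Fin m) :
    coeff hk1 x b (B + B') δ γ = coeff hk1 x b B δ γ + coeff hk1 x b B' δ γ := by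
  simp [coeff, map_add]

theorem coeff_smul (hk1 : ∀ γ, 1 ≤ k γ)
    (b : Module.Basis ((γ : Fin m) × Fin (k γ)) K (Fin d → K))
    (c : K) (B : Matrix (Fin d) (Fin d) K) (δ γ : Fin m) :
    coeff hk1 x b (c • B) δ γ = c * coeff hk1 x b B δ γ := by
  simp [coeff, _root_.map_smul]

theorem coeff_one (hk1 : ∀ γ, 1 ≤ k γ)
    (b : Module.Basis ((γ : Fin m) × Fin (k γ)) K (Fin d → K))
    (hb : ∀ p : (γ : Fin m) × Fin (k γ), b p = ((Matrix.toLin' A) ^ ((p.2 : ℕ))) (x p.1))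
    (δ γ : Fin m) :
    coeff hk1 x b (1 : Matrix (Fin d) (Fin d) K) δ γ = if δ = γ then 1 else 0 := by
  unfold coeff
  rw [Matrix.toLin'_one]
  have e : (x γ) = b ⟨γ, ⟨0, hk1 γ⟩⟩ := by rw [hb]; simp
  rw [LinearMap.id_apply, e, b.repr_self_apply]
  by_cases h : γ = δ
  · subst h; rw [if_pos rfl, if_pos rfl]
  · rw [if_neg (fun hh => h (congrArg Sigma.fst hh)),
      if_neg (fun hh => h (hh.symm))]

theorem coeff_triangle (hk1 : ∀ γ, 1 ≤ k γ)
    (hzero : ∀ γ, ((Matrix.toLin' A) ^ (k γ)) (x γ) = 0)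
    (b : Module.Basis ((γ : Fin m) × Fin (k γ)) K (Fin d → K))
    (hb : ∀ p : (γ : Fin m) × Fin (k γ), b p = ((Matrix.toLin' A) ^ ((p.2 : ℕ))) (x p.1))
    {B : Matrix (Fin d) (Fin d) K} (hc : A * B = B * A)
    {δ γ : Fin m} (h : k γ < k δ) :
    coeff hk1 x b B δ γ = 0 := by
  have h0 : ((Matrix.toLin' A) ^ (k γ)) (Matrix.toLin' B (x γ)) = 0 := by
    rw [← comm_pow A hc, hzero γ, map_zero]
  have h2 := repr_pow_apply A hzero b hb (k γ) δ (k γ) h (Matrix.toLin' B (x γ))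
  rw [h0, if_pos le_rfl] at h2
  simp only [Nat.sub_self, map_zero, Finsupp.zero_apply] at h2
  unfold coeff
  exact h2.symm

theorem coeff_mul (hk1 : ∀ γ, 1 ≤ k γ)
    (hzero : ∀ γ, ((Matrix.toLin' A) ^ (k γ)) (x γ) = 0)
    (b : Module.Basis ((γ : Fin m) × Fin (k γ)) K (Fin d → K))
    (hb : ∀ p : (γ : Fin m) × Fin (k γ), b p = ((Matrix.toLin' A) ^ ((p.2 : ℕ))) (x p.1))
    {B₁ B₂ : Matrix (Fin d) (Fin d) K} (hc1 : A * B₁ = B₁ * A)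
    (δ γ : Fin m) :
    coeff hk1 x b (B₁ * B₂) δ γ
      = ∑ ε : Fin m, coeff hk1 x b B₁ δ ε * coeff hk1 x b B₂ ε γ := by
  unfold coeff
  have e0 : Matrix.toLin' (B₁ * B₂) (x γ) = Matrix.toLin' B₁ (Matrix.toLin' B₂ (x γ)) := by
    rw [Matrix.toLin'_mul]; rfl
  rw [e0]
  conv_lhs => rw [← b.sum_repr (Matrix.toLin' B₂ (x γ))]
  rw [map_sum, map_sum, Finset.sum_apply']
  have term : ∀ q : (γ' : Fin m) × Fin (k γ'),
      b.repr (Matrix.toLin' B₁ ((b.repr (Matrix.toLin' B₂ (x γ)) q) • b q)) ⟨δ, ⟨0, hk1 δ⟩⟩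
        = if (q.2 : ℕ) = 0
            then b.repr (Matrix.toLin' B₂ (x γ)) q * coeff hk1 x b B₁ δ q.1 else 0 := by
    rintro ⟨ε, j, hj⟩
    rw [_root_.map_smul, _root_.map_smul, Finsupp.smul_apply, smul_eq_mul]
    have e1 : Matrix.toLin' B₁ (b ⟨ε, ⟨j, hj⟩⟩)
        = ((Matrix.toLin' A) ^ j) (Matrix.toLin' B₁ (x ε)) := by
      rw [hb ⟨ε, ⟨j, hj⟩⟩, comm_pow A hc1]
    rw [e1, repr_pow_apply A hzero b hb j δ 0 (hk1 δ)]
    by_cases hj0 : j = 0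
    · subst hj0
      rw [if_pos (le_refl 0), if_pos rfl]
      rfl
    · rw [if_neg (by omega), if_neg (by simpa using hj0), mul_zero]
  rw [Finset.sum_congr rfl (fun q _ => term q)]
  rw [← Finset.univ_sigma_univ, Finset.sum_sigma]
  refine Finset.sum_congr rfl fun ε _ => ?_
  rw [Finset.sum_eq_single (⟨0, hk1 ε⟩ : Fin (k ε))]
  · rw [if_pos rfl, mul_comm]
    rfl
  · intro j _ hj
    rw [if_neg (fun h => hj (Fin.ext h))]
  · intro h; exact absurd (Finset.mem_univ _) h


variable {p : ℕ → ℕ}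

def S (k : Fin m → ℕ) (e : ℕ) : Finset (Fin m) := Finset.univ.filter (fun γ => k γ = e)

theorem mem_S {e : ℕ} {γ : Fin m} (h : k γ = e) : γ ∈ S k e := by simp [S, h]

noncomputable def τ (hp : ∀ e, p e = (Finset.univ.filter (fun γ : Fin m => k γ = e)).card)
    (e : ℕ) : {γ // γ ∈ S k e} ≃ Fin (p e) :=
  Finset.equivFinOfCardEq (hp e).symm

noncomputable def emb (hp : ∀ e, p e = (Finset.univ.filter (fun γ : Fin m => k γ = e)).card)
    (e : ℕ) (i : Fin (p e)) : Fin m := ((τ hp e).symm i).1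

theorem k_emb (hp : ∀ e, p e = (Finset.univ.filter (fun γ : Fin m => k γ = e)).card)
    (e : ℕ) (i : Fin (p e)) : k (emb hp e i) = e := by
  exact (Finset.mem_filter.mp (((τ hp e).symm i).2)).2

theorem emb_inj (hp : ∀ e, p e = (Finset.univ.filter (fun γ : Fin m => k γ = e)).card)
    (e : ℕ) : Function.Injective (emb hp e) := fun i j h => by
  have := (τ hp e).symm.injective (Subtype.ext h)
  exact this

noncomputable def idx (hp : ∀ e, p e = (Finset.univ.filter (fun γ : Fin m => k γ = e)).card)
    {e : ℕ} (γ : Fin m) (h : k γ = e) : Fin (p e) := τ hp e ⟨γ, mem_S h⟩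

theorem idx_emb (hp : ∀ e, p e = (Finset.univ.filter (fun γ : Fin m => k γ = e)).card)
    (e : ℕ) (i : Fin (p e)) : idx hp (emb hp e i) (k_emb hp e i) = i := by
  unfold idx emb
  have : (⟨((τ hp e).symm i).1, mem_S (k_emb hp e i)⟩ : {γ // γ ∈ S k e}) = (τ hp e).symm i :=
    Subtype.ext rfl
  rw [this, Equiv.apply_symm_apply]

theorem emb_idx (hp : ∀ e, p e = (Finset.univ.filter (fun γ : Fin m => k γ = e)).card)
    {e : ℕ} (γ : Fin m) (h : k γ = e) : emb hp e (idx hp γ h) = γ := by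
  unfold idx emb
  rw [Equiv.symm_apply_apply]

theorem hppos (hp : ∀ e, p e = (Finset.univ.filter (fun γ : Fin m => k γ = e)).card)
    (γ : Fin m) : 0 < p (k γ) := by
  rw [hp]
  exact Finset.card_pos.mpr ⟨γ, by simp⟩

theorem hcA {B : ↥(Subalgebra.centralizer K ({A} : Set (Matrix (Fin d) (Fin d) K)))} :
    A * B.1 = B.1 * A :=
  (Subalgebra.mem_centralizer_iff K).mp B.2 A (Set.mem_singleton A)

noncomputable def Fmap (hk1 : ∀ γ, 1 ≤ k γ) (x : Fin m → (Fin d → K))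
    (b : Module.Basis ((γ : Fin m) × Fin (k γ)) K (Fin d → K))
    (hp : ∀ e, p e = (Finset.univ.filter (fun γ : Fin m => k γ = e)).card) :
    ↥(Subalgebra.centralizer K ({A} : Set (Matrix (Fin d) (Fin d) K))) →ₗ[K]
      ((e : {e : ℕ // 0 < p e}) → Matrix (Fin (p e)) (Fin (p e)) K) where
  toFun B := fun e => Matrix.of fun i j => coeff hk1 x b B.1 (emb hp e.1 i) (emb hp e.1 j)
  map_add' B B' := by
    funext e i j
    simp only [Matrix.of_apply, Pi.add_apply, Matrix.add_apply]
    rw [show ((B + B' : _)).1 = B.1 + B'.1 from rfl, coeff_add]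
  map_smul' c B := by
    funext e i j
    simp only [Matrix.of_apply, Pi.smul_apply, Matrix.smul_apply, RingHom.id_apply,
      smul_eq_mul]
    rw [show ((c • B : _)).1 = c • B.1 from rfl, coeff_smul]

theorem Fmap_one (hk1 : ∀ γ, 1 ≤ k γ) (x : Fin m → (Fin d → K))
    (b : Module.Basis ((γ : Fin m) × Fin (k γ)) K (Fin d → K))
    (hb : ∀ p : (γ : Fin m) × Fin (k γ), b p = ((Matrix.toLin' A) ^ ((p.2 : ℕ))) (x p.1))
    (hp : ∀ e, p e = (Finset.univ.filter (fun γ : Fin m => k γ = e)).card) :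
    Fmap A hk1 x b hp 1 = 1 := by
  funext e
  ext i j
  show coeff hk1 x b (1 : ↥(Subalgebra.centralizer K ({A} : Set _))).1 _ _ = _
  rw [show ((1 : ↥(Subalgebra.centralizer K ({A} : Set (Matrix (Fin d) (Fin d) K))))).1
      = (1 : Matrix (Fin d) (Fin d) K) from rfl]
  rw [coeff_one A hk1 b hb]
  show _ = (1 : Matrix (Fin (p e.1)) (Fin (p e.1)) K) i j
  rw [Matrix.one_apply]
  by_cases h : i = j
  · subst h; rw [if_pos rfl, if_pos rfl]
  · rw [if_neg (fun hh => h (emb_inj hp e.1 hh)), if_neg h]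

theorem Fmap_mul (hk1 : ∀ γ, 1 ≤ k γ) (x : Fin m → (Fin d → K))
    (hzero : ∀ γ, ((Matrix.toLin' A) ^ (k γ)) (x γ) = 0)
    (b : Module.Basis ((γ : Fin m) × Fin (k γ)) K (Fin d → K))
    (hb : ∀ p : (γ : Fin m) × Fin (k γ), b p = ((Matrix.toLin' A) ^ ((p.2 : ℕ))) (x p.1))
    (hp : ∀ e, p e = (Finset.univ.filter (fun γ : Fin m => k γ = e)).card)
    (y z : ↥(Subalgebra.centralizer K ({A} : Set (Matrix (Fin d) (Fin d) K)))) :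
    Fmap A hk1 x b hp (y * z) = Fmap A hk1 x b hp y * Fmap A hk1 x b hp z := by
  funext e
  ext i j
  show coeff hk1 x b ((y * z : _)).1 (emb hp e.1 i) (emb hp e.1 j) = _
  rw [show ((y * z : _)).1 = y.1 * z.1 from rfl]
  rw [coeff_mul A hk1 hzero b hb (hcA A) (emb hp e.1 i) (emb hp e.1 j)]
  have vanish : ∀ ε ∈ Finset.univ, ε ∉ S k e.1 →
      coeff hk1 x b y.1 (emb hp e.1 i) ε * coeff hk1 x b z.1 ε (emb hp e.1 j) = 0 := by
    intro ε _ hε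
    have hne : k ε ≠ e.1 := by simpa [S] using hε
    rcases lt_or_gt_of_ne hne with hlt | hgt
    · rw [coeff_triangle A hk1 hzero b hb (B := (y : Matrix (Fin d) (Fin d) K)) (hcA A)
        (δ := emb hp e.1 i) (γ := ε) (by rw [k_emb hp e.1 i]; exact hlt), zero_mul]
    · rw [coeff_triangle A hk1 hzero b hb (B := (z : Matrix (Fin d) (Fin d) K)) (hcA A)
        (δ := ε) (γ := emb hp e.1 j) (by rw [k_emb hp e.1 j]; exact hgt), mul_zero]
  rw [← Finset.sum_subset (Finset.subset_univ (S k e.1)) vanish]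
  rw [← Finset.sum_coe_sort]
  rw [← Equiv.sum_comp ((τ hp e.1).symm)
    (fun σ : {γ // γ ∈ S k e.1} =>
      coeff hk1 x b y.1 (emb hp e.1 i) σ.1 * coeff hk1 x b z.1 σ.1 (emb hp e.1 j))]
  rfl


section Surj

variable (hk1 : ∀ γ, 1 ≤ k γ)
  (hzero : ∀ γ, ((Matrix.toLin' A) ^ (k γ)) (x γ) = 0)
  (b : Module.Basis ((γ : Fin m) × Fin (k γ)) K (Fin d → K))
  (hb : ∀ p : (γ : Fin m) × Fin (k γ), b p = ((Matrix.toLin' A) ^ ((p.2 : ℕ))) (x p.1))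
  (hp : ∀ e, p e = (Finset.univ.filter (fun γ : Fin m => k γ = e)).card)
  (M : (e : {e : ℕ // 0 < p e}) → Matrix (Fin (p e)) (Fin (p e)) K)

noncomputable def gmap : (Fin d → K) →ₗ[K] (Fin d → K) :=
  b.constr K fun q => ∑ l : Fin (p (k q.1)),
    M ⟨k q.1, hppos hp q.1⟩ l (idx hp q.1 rfl) •
      b ⟨emb hp (k q.1) l, ⟨(q.2 : ℕ), by rw [k_emb hp (k q.1) l]; exact q.2.2⟩⟩

noncomputable def BM : Matrix (Fin d) (Fin d) K := LinearMap.toMatrix' (gmap b hp M)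

theorem toLin'_BM : Matrix.toLin' (BM b hp M) = gmap b hp M := Matrix.toLin'_toMatrix' _

include hzero hb

theorem gmap_pow (γ : Fin m) (n : ℕ) :
    gmap b hp M (((Matrix.toLin' A) ^ n) (x γ))
      = ∑ l : Fin (p (k γ)), M ⟨k γ, hppos hp γ⟩ l (idx hp γ rfl) •
          (((Matrix.toLin' A) ^ n) (x (emb hp (k γ) l))) := by
  by_cases h : n < k γ
  · rw [pow_x A hzero b hb, dif_pos h]
    unfold gmap
    rw [Module.Basis.constr_basis]
    refine Finset.sum_congr rfl fun l _ => ?_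
    congr 1
    rw [pow_x A hzero b hb, dif_pos (by rw [k_emb hp (k γ) l]; exact h)]
  · rw [pow_x A hzero b hb, dif_neg h, map_zero]
    symm
    refine Finset.sum_eq_zero fun l _ => ?_
    rw [pow_x A hzero b hb, dif_neg (by rw [k_emb hp (k γ) l]; exact h), smul_zero]

theorem gmap_comm :
    (Matrix.toLin' A) ∘ₗ gmap b hp M = gmap b hp M ∘ₗ (Matrix.toLin' A) := by
  refine b.ext fun q => ?_
  rcases q with ⟨γ, i, hi⟩
  simp only [LinearMap.comp_apply]
  rw [hb ⟨γ, ⟨i, hi⟩⟩]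
  have e1 : ∀ γ' : Fin m, Matrix.toLin' A (((Matrix.toLin' A) ^ i) (x γ'))
      = ((Matrix.toLin' A) ^ (i + 1)) (x γ') := by
    intro γ'
    rw [← Module.End.mul_apply, ← pow_succ']
  rw [e1, gmap_pow A hzero b hb hp M, gmap_pow A hzero b hb hp M, map_sum]
  refine Finset.sum_congr rfl fun l _ => ?_
  rw [_root_.map_smul, e1]

theorem BM_mem : (BM b hp M) ∈ Subalgebra.centralizer K ({A} : Set (Matrix (Fin d) (Fin d) K)) := by
  rw [Subalgebra.mem_centralizer_iff]
  intro g hg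
  rw [Set.mem_singleton_iff] at hg
  rw [hg]
  apply LinearEquiv.injective (Matrix.toLin' : Matrix (Fin d) (Fin d) K ≃ₗ[K] _)
  rw [Matrix.toLin'_mul, Matrix.toLin'_mul, toLin'_BM, gmap_comm A hzero b hb hp M]

theorem coeff_BM (e' : {e : ℕ // 0 < p e}) (δ γ : Fin m)
    (hδ : k δ = e'.1) (hγ : k γ = e'.1) :
    coeff hk1 x b (BM b hp M) δ γ = M e' (idx hp δ hδ) (idx hp γ hγ) := by
  have he : (⟨k γ, hppos hp γ⟩ : {e : ℕ // 0 < p e}) = e' := Subtype.ext hγ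
  subst he
  unfold coeff
  rw [toLin'_BM]
  have e0 : ((Matrix.toLin' A) ^ 0) (x γ) = x γ := by rw [pow_zero]; rfl
  rw [← e0, gmap_pow A hzero b hb hp M, map_sum, Finset.sum_apply']
  have hterm : ∀ l : Fin (p (k γ)),
      (b.repr (M ⟨k γ, hppos hp γ⟩ l (idx hp γ rfl) •
        (((Matrix.toLin' A) ^ 0) (x (emb hp (k γ) l))))) ⟨δ, ⟨0, hk1 δ⟩⟩
      = if emb hp (k γ) l = δ then M ⟨k γ, hppos hp γ⟩ l (idx hp γ rfl) else 0 := by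
    intro l
    rw [_root_.map_smul, Finsupp.smul_apply, smul_eq_mul,
      pow_x A hzero b hb, dif_pos (show 0 < k (emb hp (k γ) l) from hk1 _), b.repr_self_apply]
    by_cases h : emb hp (k γ) l = δ
    · rw [if_pos h, if_pos, mul_one]
      exact Sigma.ext h ((Fin.heq_ext_iff (congrArg k h)).mpr rfl)
    · rw [if_neg h, if_neg (fun hh => h (congrArg Sigma.fst hh)), mul_zero]
  rw [Finset.sum_congr rfl (fun l _ => hterm l)]
  rw [Finset.sum_eq_single (idx hp δ hδ)]
  · rw [if_pos (emb_idx hp δ hδ)]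
  · intro l _ hl
    rw [if_neg (fun hh => hl ?_)]
    have := idx_emb hp (k γ) l
    rw [← this]
    congr 1
  · intro h; exact absurd (Finset.mem_univ _) h

theorem Fmap_BM :
    Fmap A hk1 x b hp ⟨BM b hp M, BM_mem A hzero b hb hp M⟩ = M := by
  funext e
  ext i j
  show coeff hk1 x b (BM b hp M) (emb hp e.1 i) (emb hp e.1 j) = M e i j
  rw [coeff_BM A hk1 hzero b hb hp M e _ _ (k_emb hp e.1 i) (k_emb hp e.1 j)]
  rw [show idx hp (emb hp e.1 i) (k_emb hp e.1 i) = i from idx_emb hp e.1 i,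
    show idx hp (emb hp e.1 j) (k_emb hp e.1 j) = j from idx_emb hp e.1 j]

end Surj


theorem ker_nilpotent (hk1 : ∀ γ, 1 ≤ k γ)
    (hzero : ∀ γ, ((Matrix.toLin' A) ^ (k γ)) (x γ) = 0)
    (b : Module.Basis ((γ : Fin m) × Fin (k γ)) K (Fin d → K))
    (hb : ∀ p : (γ : Fin m) × Fin (k γ), b p = ((Matrix.toLin' A) ^ ((p.2 : ℕ))) (x p.1))
    {B : Matrix (Fin d) (Fin d) K} (hcB : A * B = B * A)
    (h0 : ∀ δ γ, k γ ≤ k δ → coeff hk1 x b B δ γ = 0) : IsNilpotent B := by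
  classical
  set Mx := Finset.univ.sup k with hMx
  have hkM : ∀ γ, k γ ≤ Mx := fun γ => Finset.le_sup (Finset.mem_univ γ)
  set φ : ((γ : Fin m) × Fin (k γ)) → ℕ :=
    fun q => (q.2 : ℕ) * (Mx + 1) + (Mx - k q.1) with hφ
  set N := Mx * (Mx + 1) + 1 with hN
  have hφN : ∀ q, φ q < N := by
    intro q
    have h1 : (q.2 : ℕ) + 1 ≤ k q.1 := q.2.2
    have h2 : k q.1 ≤ Mx := hkM q.1
    have h3 : ((q.2 : ℕ) + 1) * (Mx + 1) ≤ Mx * (Mx + 1) :=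
      Nat.mul_le_mul_right _ (by omega)
    have h4 : φ q < ((q.2 : ℕ) + 1) * (Mx + 1) := by
      simp only [hφ, add_mul, one_mul]
      omega
    omega
  set W : ℕ → Submodule K (Fin d → K) :=
    fun t => Submodule.span K (b '' {q | t ≤ φ q}) with hW
  have key : ∀ (q : (γ : Fin m) × Fin (k γ)) (t : ℕ), t ≤ φ q →
      Matrix.toLin' B (b q) ∈ W (t + 1) := by
    rintro ⟨γ, i, hi⟩ t ht
    have e1 : Matrix.toLin' B (b ⟨γ, ⟨i, hi⟩⟩)
        = ((Matrix.toLin' A) ^ i) (Matrix.toLin' B (x γ)) := by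
      rw [hb ⟨γ, ⟨i, hi⟩⟩, comm_pow A hcB]
    rw [e1, ← b.sum_repr (Matrix.toLin' B (x γ)), map_sum]
    apply Submodule.sum_mem
    rintro ⟨δ, j, hj⟩ -
    rw [_root_.map_smul]
    have e2 : ((Matrix.toLin' A) ^ i) (b ⟨δ, ⟨j, hj⟩⟩)
        = ((Matrix.toLin' A) ^ (i + j)) (x δ) := by
      rw [hb ⟨δ, ⟨j, hj⟩⟩, ← Module.End.mul_apply, ← pow_add]
    rw [e2, pow_x A hzero b hb]
    by_cases h2 : i + j < k δ
    · rw [dif_pos h2]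
      by_cases hj0 : j = 0
      · subst hj0
        by_cases hle : k γ ≤ k δ
        · have hz : b.repr (Matrix.toLin' B (x γ)) ⟨δ, ⟨0, hj⟩⟩ = 0 := h0 δ γ hle
          rw [hz, zero_smul]
          exact Submodule.zero_mem _
        · apply Submodule.smul_mem
          apply Submodule.subset_span
          refine ⟨⟨δ, ⟨i + 0, h2⟩⟩, ?_, rfl⟩
          simp only [Set.mem_setOf_eq, hφ, Nat.add_zero] at ht ⊢
          have hkδ : k δ < k γ := by omega
          have hkγ : k γ ≤ Mx := hkM γ
          have hkδ2 : k δ ≤ Mx := hkM δ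
          generalize i * (Mx + 1) = c at ht ⊢
          omega
      · apply Submodule.smul_mem
        apply Submodule.subset_span
        refine ⟨⟨δ, ⟨i + j, h2⟩⟩, ?_, rfl⟩
        simp only [Set.mem_setOf_eq, hφ, add_mul] at ht ⊢
        have hj1 : Mx + 1 ≤ j * (Mx + 1) := Nat.le_mul_of_pos_left _ (by omega)
        have hkγ : k γ ≤ Mx := hkM γ
        generalize i * (Mx + 1) = c at ht ⊢
        generalize j * (Mx + 1) = c2 at hj1 ⊢
        omega
    · rw [dif_neg h2, smul_zero]
      exact Submodule.zero_mem _
  have hstep : ∀ t, W t ≤ Submodule.comap (Matrix.toLin' B) (W (t + 1)) := by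
    intro t
    apply Submodule.span_le.mpr
    rintro _ ⟨q, hq, rfl⟩
    simpa only [SetLike.mem_coe, Submodule.mem_comap] using key q t hq
  have hpow : ∀ (n t : ℕ) (v : Fin d → K), v ∈ W t →
      (((Matrix.toLin' B)) ^ n) v ∈ W (n + t) := by
    intro n
    induction n with
    | zero => intro t v hv; simpa using hv
    | succ n ih =>
      intro t v hv
      have h1 : Matrix.toLin' B v ∈ W (t + 1) := hstep t hv
      have h2 := ih (t + 1) _ h1
      rw [show n + (t + 1) = (n + 1) + t by omega] at h2
      rw [pow_succ, Module.End.mul_apply]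
      exact h2
  have hWN : W N = ⊥ := by
    have himg : {q : (γ : Fin m) × Fin (k γ) | N ≤ φ q} = ∅ := by
      ext q
      simp only [Set.mem_setOf_eq, Set.mem_empty_iff_false, iff_false, not_le]
      exact hφN q
    show Submodule.span K (⇑b '' {q | N ≤ φ q}) = ⊥
    rw [himg, Set.image_empty, Submodule.span_empty]
  refine ⟨N, ?_⟩
  apply LinearEquiv.injective (Matrix.toLin' : Matrix (Fin d) (Fin d) K ≃ₗ[K] _)
  rw [toLin'_pow, map_zero]
  refine b.ext fun q => ?_
  have h1 : b q ∈ W 0 := Submodule.subset_span ⟨q, Nat.zero_le _, rfl⟩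
  have h2 := hpow N 0 (b q) h1
  rw [hWN] at h2
  simpa using (Submodule.mem_bot K).mp (by simpa using h2)

theorem lift_isUnit (u : ↥(Subalgebra.centralizer K ({A} : Set (Matrix (Fin d) (Fin d) K))))
    (hu : IsUnit (u : Matrix (Fin d) (Fin d) K)) : IsUnit u := by
  obtain ⟨U, hU⟩ := hu
  have hcu : Commute A (U : Matrix (Fin d) (Fin d) K) := by
    rw [hU]
    exact (hcA A (B := u) : Commute A _)
  have hinv : Commute A ((U⁻¹ : _ˣ) : Matrix (Fin d) (Fin d) K) := hcu.units_inv_right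
  have hmem : ((U⁻¹ : _ˣ) : Matrix (Fin d) (Fin d) K)
      ∈ Subalgebra.centralizer K ({A} : Set (Matrix (Fin d) (Fin d) K)) := by
    rw [Subalgebra.mem_centralizer_iff]
    intro g hg
    rw [Set.mem_singleton_iff] at hg
    rw [hg]
    exact hinv.eq
  refine isUnit_iff_exists.mpr ⟨⟨_, hmem⟩, ?_, ?_⟩
  · exact Subtype.ext (by rw [show ((u * ⟨_, hmem⟩ : _)).1 = u.1 * _ from rfl, ← hU, U.mul_inv]; rfl)
  · exact Subtype.ext (by rw [show ((⟨_, hmem⟩ * u : _)).1 = _ * u.1 from rfl, ← hU, U.inv_mul]; rfl)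

section Lid

def Lid (e0 : {e : ℕ // 0 < p e}) (u : Fin (p e0) → K) :
    Ideal ((e : {e : ℕ // 0 < p e}) → Matrix (Fin (p e)) (Fin (p e)) K) where
  carrier := {P | P e0 *ᵥ u = 0}
  add_mem' := by
    intro P Q hP hQ
    show (P + Q) e0 *ᵥ u = 0
    rw [Pi.add_apply, Matrix.add_mulVec, hP, hQ, add_zero]
  zero_mem' := by
    show (0 : (e : {e : ℕ // 0 < p e}) → Matrix (Fin (p e)) (Fin (p e)) K) e0 *ᵥ u = 0
    rw [Pi.zero_apply, Matrix.zero_mulVec]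
  smul_mem' := by
    intro Q P hP
    show (Q * P) e0 *ᵥ u = 0
    rw [Pi.mul_apply, ← Matrix.mulVec_mulVec, hP, Matrix.mulVec_zero]

theorem Lid_ne_top (e0 : {e : ℕ // 0 < p e}) (u : Fin (p e0) → K) (hu : u ≠ 0) :
    Lid e0 u ≠ ⊤ := by
  intro h
  have h1 : (1 : (e : {e : ℕ // 0 < p e}) → Matrix (Fin (p e)) (Fin (p e)) K) ∈ Lid e0 u :=
    h.symm ▸ Submodule.mem_top
  have h2 : (1 : (e : {e : ℕ // 0 < p e}) → Matrix (Fin (p e)) (Fin (p e)) K) e0 *ᵥ u = 0 := h1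
  rw [Pi.one_apply, Matrix.one_mulVec] at h2
  exact hu h2

theorem Lid_max (e0 : {e : ℕ // 0 < p e}) (u : Fin (p e0) → K) (hu : u ≠ 0) :
    (Lid e0 u).IsMaximal := by
  classical
  refine ⟨⟨Lid_ne_top e0 u hu, ?_⟩⟩
  intro J hJ
  obtain ⟨P, hPJ, hPL⟩ := SetLike.exists_of_lt hJ
  have hw : P e0 *ᵥ u ≠ 0 := hPL
  set w := P e0 *ᵥ u with hwdef
  obtain ⟨j0, hj0⟩ : ∃ j0, w j0 ≠ 0 := by
    by_contra hc
    push_neg at hc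
    exact hw (funext hc)
  rw [Ideal.eq_top_iff_one]
  have hQ : ∀ Q : (e : {e : ℕ // 0 < p e}) → Matrix (Fin (p e)) (Fin (p e)) K, Q ∈ J := by
    intro Q
    set R : Matrix (Fin (p e0)) (Fin (p e0)) K :=
      Matrix.of fun i j => if j = j0 then (Q e0 *ᵥ u) i * (w j0)⁻¹ else 0 with hR
    set R' : (e : {e : ℕ // 0 < p e}) → Matrix (Fin (p e)) (Fin (p e)) K :=
      Function.update 0 e0 R with hR'
    have hRP : (R' * P) e0 *ᵥ u = Q e0 *ᵥ u := by
      rw [Pi.mul_apply, ← Matrix.mulVec_mulVec]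
      have : R' e0 = R := by rw [hR']; simp
      rw [this, ← hwdef]
      funext i
      show (∑ j, R i j * w j) = _
      rw [Finset.sum_eq_single j0]
      · show (if j0 = j0 then (Q e0 *ᵥ u) i * (w j0)⁻¹ else 0) * w j0 = _
        rw [if_pos rfl, mul_assoc, inv_mul_cancel₀ hj0, mul_one]
      · intro j _ hj
        show (if j = j0 then _ else 0) * w j = 0
        rw [if_neg hj, zero_mul]
      · intro h; exact absurd (Finset.mem_univ _) h
    have hsub : Q - R' * P ∈ Lid e0 u := by
      show (Q - R' * P) e0 *ᵥ u = 0
      rw [Pi.sub_apply, Matrix.sub_mulVec, hRP, sub_self]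
    have hmul : R' * P ∈ J := by
      have := J.smul_mem R' hPJ
      simpa [smul_eq_mul] using this
    have := J.add_mem (hJ.le hsub) hmul
    simpa using this
  exact hQ 1

end Lid

end Stmt16Aux

open Stmt16Aux

theorem stmt16 {K : Type*} [Field K] {d : ℕ} (A : Matrix (Fin d) (Fin d) K)
    (hA : IsNilpotent A) {m : ℕ} (k : Fin m → ℕ) (hk1 : ∀ γ, 1 ≤ k γ)
    (x : Fin m → (Fin d → K))
    (hzero : ∀ γ, ((Matrix.toLin' A) ^ (k γ)) (x γ) = 0)
    (b : Module.Basis ((γ : Fin m) × Fin (k γ)) K (Fin d → K))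
    (hb : ∀ p : (γ : Fin m) × Fin (k γ), b p = ((Matrix.toLin' A) ^ ((p.2 : ℕ))) (x p.1))
    (p : ℕ → ℕ)
    (hp : ∀ e, p e = (Finset.univ.filter (fun γ : Fin m => k γ = e)).card) :
    ∃ f : Subalgebra.centralizer K ({A} : Set (Matrix (Fin d) (Fin d) K)) →ₐ[K]
        ((e : {e : ℕ // 0 < p e}) → Matrix (Fin (p e)) (Fin (p e)) K),
      Function.Surjective f ∧
      ∀ y : Subalgebra.centralizer K ({A} : Set (Matrix (Fin d) (Fin d) K)),
        f y = 0 ↔ y ∈ Ideal.jacobson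
          (⊥ : Ideal (Subalgebra.centralizer K ({A} : Set (Matrix (Fin d) (Fin d) K)))) := by
  classical
  set f : Subalgebra.centralizer K ({A} : Set (Matrix (Fin d) (Fin d) K)) →ₐ[K]
      ((e : {e : ℕ // 0 < p e}) → Matrix (Fin (p e)) (Fin (p e)) K) :=
    AlgHom.ofLinearMap (Fmap A hk1 x b hp)
      (Fmap_one A hk1 x b hb hp)
      (Fmap_mul A hk1 x hzero b hb hp) with hfdef
  have hfapp : ∀ z, f z = Fmap A hk1 x b hp z := fun z => rfl
  have hsurj : Function.Surjective f := by
    intro M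
    refine ⟨⟨BM b hp M, BM_mem A hzero b hb hp M⟩, ?_⟩
    rw [hfapp]
    exact Fmap_BM A hk1 hzero b hb hp M
  refine ⟨f, hsurj, ?_⟩
  intro y
  constructor
  · intro hfy
    show y ∈ sInf {J : Ideal _ | ⊥ ≤ J ∧ J.IsMaximal}
    refine Submodule.mem_sInf.mpr ?_
    rintro I ⟨-, hImax⟩
    by_contra hyI
    have hlt : I < I ⊔ Ideal.span {y} := by
      refine lt_of_le_of_ne le_sup_left (fun hEq => hyI ?_)
      have h1 : y ∈ I ⊔ Ideal.span {y} :=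
        Submodule.mem_sup_right (Ideal.subset_span rfl)
      rwa [← hEq] at h1
    have htop : I ⊔ Ideal.span {y} = ⊤ := hImax.out.2 _ hlt
    have h1 : (1 : _) ∈ I ⊔ Ideal.span {y} := htop.symm ▸ Submodule.mem_top
    obtain ⟨a, haI, bb, hbb, hab⟩ := Submodule.mem_sup.mp h1
    obtain ⟨r, hr⟩ := Submodule.mem_span_singleton.mp hbb
    have ha : a = 1 - r * y := by
      rw [← hab, ← hr, smul_eq_mul, add_sub_cancel_right]
    have hf0 : f (r * y) = 0 := by rw [_root_.map_mul, hfy, mul_zero]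
    have h0 : ∀ δ γ', k γ' ≤ k δ →
        coeff hk1 x b ((r * y : _) : Matrix (Fin d) (Fin d) K) δ γ' = 0 := by
      intro δ γ' hle
      rcases eq_or_lt_of_le hle with heq | hlt2
      · have hδγ : k δ = k γ' := heq.symm
        have h2 : coeff hk1 x b ((r * y : _) : Matrix (Fin d) (Fin d) K) δ γ'
            = (f (r * y)) ⟨k γ', hppos hp γ'⟩ (idx hp δ hδγ) (idx hp γ' rfl) := by
          show _ = coeff hk1 x b ((r * y : _) : Matrix (Fin d) (Fin d) K)
            (emb hp (k γ') (idx hp δ hδγ)) (emb hp (k γ') (idx hp γ' rfl))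
          rw [emb_idx hp δ hδγ, emb_idx hp γ' rfl]
        rw [h2, hf0]
        rfl
      · exact coeff_triangle A hk1 hzero b hb (hcA A) hlt2
    have hnil : IsNilpotent ((r * y : _) : Matrix (Fin d) (Fin d) K) :=
      ker_nilpotent A hk1 hzero b hb (hcA A) h0
    have hua : IsUnit a := by
      rw [ha]
      apply lift_isUnit
      show IsUnit ((1 - r * y : _) : Matrix (Fin d) (Fin d) K)
      rw [show ((1 - r * y : _) : Matrix (Fin d) (Fin d) K)
          = 1 - ((r * y : _) : Matrix (Fin d) (Fin d) K) from rfl]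
      exact hnil.isUnit_one_sub
    exact hImax.ne_top (Ideal.eq_top_of_isUnit_mem I haI hua)
  · intro hy
    have hy2 : ∀ (I : Ideal (Subalgebra.centralizer K ({A} : Set (Matrix (Fin d) (Fin d) K)))),
        I.IsMaximal → y ∈ I := by
      intro I hI
      have hy' : y ∈ sInf {J : Ideal _ | ⊥ ≤ J ∧ J.IsMaximal} := hy
      exact Submodule.mem_sInf.mp hy' I ⟨bot_le, hI⟩
    funext e
    ext a c
    show (f y) e a c = 0
    have hune : (Pi.single c 1 : Fin (p e) → K) ≠ 0 := by
      intro h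
      have := congrFun h c
      simp at this
    haveI hmax := Lid_max e (Pi.single c (1 : K)) hune
    have hmem := hy2 (Ideal.comap f (Lid e (Pi.single c 1)))
      (Ideal.comap_isMaximal_of_surjective f hsurj)
    have hfy : f y ∈ Lid e (Pi.single c 1) := Ideal.mem_comap.mp hmem
    have h3 : (f y) e *ᵥ (Pi.single c 1) = 0 := hfy
    rw [Matrix.mulVec_single] at h3
    have h4 := congrFun h3 a
    simpa using h4
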